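/- Let δ > 0 be a real number, let σ be a real number with 0 ≤ σ ≤ 1, and let ν be a positive integer with ν ≥ ⌈δ − σ⌉. Define Y = {(α, ψ) ∈ ℝ_{≥0} × {0,1}^ν : α + Σ_{i=1}^ν ψ_i ≥ δ and α ≤ σ}. Then the convex hull of Y equals the set of all (α, ψ) ∈ ℝ × ℝ^ν satisfying: 0 ≤ α ≤ σ; 0 ≤ ψ_i ≤ 1 for all i ∈ [ν]; α + Σ_i ψ_i ≥ δ; Σ_i ψ_i ≥ ⌈δ − σ⌉; and α ≥ (δ − ⌊δ⌋) · (⌈δ⌉ − Σ_i ψ_i). -/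

import Mathlib

open Set

def Yset (ν : ℕ) (δ σ : ℝ) : Set (ℝ × (Fin ν → ℝ)) :=
  {p : ℝ × (Fin ν → ℝ) | 0 ≤ p.1 ∧ (∀ i, p.2 i = 0 ∨ p.2 i = 1) ∧
    δ ≤ p.1 + ∑ i, p.2 i ∧ p.1 ≤ σ}

def Pset (ν : ℕ) (δ σ : ℝ) : Set (ℝ × (Fin ν → ℝ)) :=
  {p : ℝ × (Fin ν → ℝ) | 0 ≤ p.1 ∧ p.1 ≤ σ ∧ (∀ i, 0 ≤ p.2 i ∧ p.2 i ≤ 1) ∧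
    δ ≤ p.1 + (∑ i, p.2 i) ∧
    (⌈δ - σ⌉ : ℝ) ≤ (∑ i, p.2 i) ∧
    (δ - ⌊δ⌋) * ((⌈δ⌉ : ℝ) - ∑ i, p.2 i) ≤ p.1}

lemma ceil_cases (δ : ℝ) : (⌈δ⌉:ℤ) = ⌊δ⌋ ∨ (⌈δ⌉:ℤ) = ⌊δ⌋ + 1 := by
  have h1 := Int.ceil_le_floor_add_one δ
  have h2 := Int.floor_le_ceil δ
  omega

lemma convex_P (ν : ℕ) (δ σ : ℝ) : Convex ℝ (Pset ν δ σ) := by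
  intro x hx y hy a b ha hb hab
  obtain rfl : b = 1 - a := by linarith
  simp only [Pset, Set.mem_setOf_eq] at hx hy ⊢
  obtain ⟨x1, x2, x3, x4, x5, x6⟩ := hx
  obtain ⟨y1, y2, y3, y4, y5, y6⟩ := hy
  have hfst : (a • x + (1-a) • y).1 = a * x.1 + (1-a) * y.1 := rfl
  have hsum : (∑ k, (a • x + (1-a) • y).2 k) = a * (∑ k, x.2 k) + (1-a) * (∑ k, y.2 k) := by
    have : ∀ k, (a • x + (1-a) • y).2 k = a * x.2 k + (1-a) * y.2 k := fun k => rfl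
    simp only [this, Finset.sum_add_distrib, Finset.mul_sum]
  have ha' : (0:ℝ) ≤ 1 - a := hb
  refine ⟨?_, ?_, ?_, ?_, ?_, ?_⟩
  · rw [hfst]; nlinarith
  · rw [hfst]; nlinarith
  · intro k
    have hxk := x3 k; have hyk := y3 k
    have : (a • x + (1-a) • y).2 k = a * x.2 k + (1-a) * y.2 k := rfl
    rw [this]
    constructor <;> nlinarith [hxk.1, hxk.2, hyk.1, hyk.2]
  · rw [hfst, hsum]; nlinarith
  · rw [hsum]; nlinarith
  · rw [hfst, hsum]
    nlinarith [mul_le_mul_of_nonneg_left x6 ha, mul_le_mul_of_nonneg_left y6 ha']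

lemma sum_int_of_eraseone {ν : ℕ} (ψ : Fin ν → ℝ) (i : Fin ν)
    (h : ∀ j, j ≠ i → ψ j = 0 ∨ ψ j = 1) :
    ∃ m : ℤ, ∑ j ∈ Finset.univ.erase i, ψ j = (m:ℝ) := by
  refine ⟨∑ j ∈ Finset.univ.erase i, if ψ j = 1 then 1 else 0, ?_⟩
  push_cast
  refine Finset.sum_congr rfl fun j hj => ?_
  rcases h j (Finset.ne_of_mem_erase hj) with h0 | h1
  · rw [h0]; norm_num
  · rw [h1]; norm_num

lemma sum_int_of_01 {ν : ℕ} (ψ : Fin ν → ℝ) (h : ∀ j, ψ j = 0 ∨ ψ j = 1) :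
    ∃ m : ℤ, ∑ j, ψ j = (m:ℝ) := by
  refine ⟨∑ j, if ψ j = 1 then 1 else 0, ?_⟩
  push_cast
  refine Finset.sum_congr rfl fun j _ => ?_
  rcases h j with h0 | h1
  · rw [h0]; norm_num
  · rw [h1]; norm_num

lemma Y_subset_P (ν : ℕ) (δ σ : ℝ) (hσ1 : σ ≤ 1) : Yset ν δ σ ⊆ Pset ν δ σ := by
  intro p hp
  obtain ⟨h0, hb, hds, hs⟩ := hp
  obtain ⟨k, hk⟩ := sum_int_of_01 p.2 hb
  refine ⟨h0, hs, fun i => by rcases hb i with h | h <;> simp [h], hds, ?_, ?_⟩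
  · rw [hk]
    exact_mod_cast Int.ceil_le.mpr (by push_cast; linarith)
  · rw [hk]
    rcases le_or_gt (⌈δ⌉:ℤ) k with h | h
    · have hck : ((⌈δ⌉:ℝ)) ≤ (k:ℝ) := by exact_mod_cast h
      have hf0 : 0 ≤ δ - ⌊δ⌋ := by linarith [Int.floor_le δ]
      nlinarith
    · have hk1 : (k:ℝ) ≤ (⌈δ⌉:ℝ) - 1 := by
        have : k ≤ ⌈δ⌉ - 1 := by omega
        have : (k:ℝ) ≤ ((⌈δ⌉ - 1 : ℤ):ℝ) := by exact_mod_cast this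
        push_cast at this ⊢; linarith
      have hα : δ - (k:ℝ) ≤ p.1 := by linarith [hds, hk.symm.le]; 
      suffices hsuf : (δ - ⌊δ⌋) * ((⌈δ⌉:ℝ) - k) ≤ δ - k by
        calc (δ - ⌊δ⌋) * ((⌈δ⌉:ℝ) - k) ≤ δ - k := hsuf
        _ ≤ p.1 := by rw [hk] at hds; linarith
      rcases ceil_cases δ with hc | hc
      · have hcr : ((⌈δ⌉:ℝ)) = (⌊δ⌋:ℝ) := by exact_mod_cast hc
        have hδint : δ = (⌊δ⌋:ℝ) := le_antisymm (by linarith [Int.le_ceil δ]) (Int.floor_le δ)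
        rw [show δ - (⌊δ⌋:ℝ) = 0 by linarith, zero_mul]
        linarith
      · have hcr : ((⌈δ⌉:ℝ)) = (⌊δ⌋:ℝ) + 1 := by exact_mod_cast hc
        have h1 : δ - ⌊δ⌋ < 1 := by linarith [Int.lt_floor_add_one δ]
        have h2 : (k:ℝ) ≤ (⌊δ⌋:ℝ) := by linarith
        nlinarith [mul_nonneg (sub_nonneg.mpr h2) (by linarith : (0:ℝ) ≤ 1 - (δ - ⌊δ⌋))]

lemma compact_P (ν : ℕ) (δ σ : ℝ) : IsCompact (Pset ν δ σ) := by
  have hsub : Pset ν δ σ ⊆ (Icc (0:ℝ) σ) ×ˢ (Set.pi Set.univ fun _ : Fin ν => Icc (0:ℝ) 1) := by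
    rintro p ⟨h1, h2, h3, -⟩
    exact ⟨⟨h1, h2⟩, fun i _ => h3 i⟩
  have hK : IsCompact ((Icc (0:ℝ) σ) ×ˢ (Set.pi Set.univ fun _ : Fin ν => Icc (0:ℝ) 1)) :=
    isCompact_Icc.prod (isCompact_univ_pi fun _ => isCompact_Icc)
  refine hK.of_isClosed_subset ?_ hsub
  have c1 : Continuous fun p : ℝ × (Fin ν → ℝ) => p.1 := continuous_fst
  have cs : Continuous fun p : ℝ × (Fin ν → ℝ) => ∑ i, p.2 i :=
    continuous_finset_sum _ fun i _ => (continuous_apply i).comp continuous_snd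
  have : Pset ν δ σ =
      {p : ℝ × (Fin ν → ℝ) | 0 ≤ p.1} ∩ ({p | p.1 ≤ σ} ∩
      ((⋂ i, ({p : ℝ × (Fin ν → ℝ) | 0 ≤ p.2 i} ∩ {p | p.2 i ≤ 1})) ∩
      ({p : ℝ × (Fin ν → ℝ) | δ ≤ p.1 + ∑ i, p.2 i} ∩
      ({p : ℝ × (Fin ν → ℝ) | (⌈δ - σ⌉ : ℝ) ≤ ∑ i, p.2 i} ∩
       {p : ℝ × (Fin ν → ℝ) | (δ - ⌊δ⌋) * ((⌈δ⌉ : ℝ) - ∑ i, p.2 i) ≤ p.1})))) := by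
    ext p
    simp only [Pset, Set.mem_setOf_eq, Set.mem_inter_iff, Set.mem_iInter, forall_and]
  rw [this]
  refine (isClosed_le continuous_const c1).inter ((isClosed_le c1 continuous_const).inter
    ((isClosed_iInter fun i => (isClosed_le continuous_const
        ((continuous_apply i).comp continuous_snd)).inter
      (isClosed_le ((continuous_apply i).comp continuous_snd) continuous_const)).inter
    ((isClosed_le continuous_const (c1.add cs)).inter
    ((isClosed_le continuous_const cs).inter
     (isClosed_le (by continuity) c1)))))

lemma finite_V (ν : ℕ) (δ σ : ℝ) :
    Set.Finite {p ∈ Yset ν δ σ | p.1 = 0 ∨ p.1 = σ ∨ p.1 + ∑ i, p.2 i = δ} := by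
  set F : Set (Fin ν → ℝ) := Set.pi Set.univ fun _ => ({0, 1} : Set ℝ) with hF
  have hFfin : F.Finite := Set.Finite.pi fun _ => (Set.finite_singleton 1).insert 0
  have hsub : {p ∈ Yset ν δ σ | p.1 = 0 ∨ p.1 = σ ∨ p.1 + ∑ i, p.2 i = δ} ⊆
      ((fun ψ => ((0:ℝ), ψ)) '' F) ∪ ((fun ψ => (σ, ψ)) '' F) ∪
      ((fun ψ => (δ - ∑ k, ψ k, ψ)) '' F) := by
    rintro p ⟨⟨-, hb, -, -⟩, hdisj⟩
    have hpF : p.2 ∈ F := by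
      intro i _
      rcases hb i with h | h <;> simp [h]
    rcases hdisj with h | h | h
    · exact Or.inl (Or.inl ⟨p.2, hpF, show ((0:ℝ), p.2) = p from Prod.ext h.symm rfl⟩)
    · exact Or.inl (Or.inr ⟨p.2, hpF, show (σ, p.2) = p from Prod.ext h.symm rfl⟩)
    · exact Or.inr ⟨p.2, hpF, show (δ - ∑ k, p.2 k, p.2) = p from Prod.ext (show δ - ∑ k, p.2 k = p.1 by linarith) rfl⟩
  exact Set.Finite.subset (((hFfin.image _).union (hFfin.image _)).union (hFfin.image _)) hsub

lemma Y_subset_hullV (ν : ℕ) (δ σ : ℝ) (hσ0 : 0 ≤ σ) :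
    Yset ν δ σ ⊆ convexHull ℝ {p ∈ Yset ν δ σ | p.1 = 0 ∨ p.1 = σ ∨ p.1 + ∑ i, p.2 i = δ} := by
  set V := {p ∈ Yset ν δ σ | p.1 = 0 ∨ p.1 = σ ∨ p.1 + ∑ i, p.2 i = δ} with hV
  intro p hp
  obtain ⟨h0, hb, hds, hs⟩ := hp
  set S := ∑ i, p.2 i with hS
  set lo := max 0 (δ - S) with hlo
  have hlo0 : 0 ≤ lo := le_max_left _ _
  have hloS : δ - S ≤ lo := le_max_right _ _
  have hlop : lo ≤ p.1 := max_le h0 (by linarith)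
  have hlo_mem : ((lo, p.2) : ℝ × (Fin ν → ℝ)) ∈ V := by
    refine ⟨⟨hlo0, hb, ?_, le_trans hlop hs⟩, ?_⟩
    · show δ ≤ lo + ∑ i, p.2 i
      rw [← hS]; linarith
    · rcases max_choice 0 (δ - S) with h | h
      · exact Or.inl h
      · refine Or.inr (Or.inr ?_)
        show lo + ∑ i, p.2 i = δ
        rw [← hS, hlo, h]; ring
  have hσ_mem : ((σ, p.2) : ℝ × (Fin ν → ℝ)) ∈ V := by
    refine ⟨⟨hσ0, hb, ?_, le_refl σ⟩, Or.inr (Or.inl rfl)⟩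
    show δ ≤ σ + ∑ i, p.2 i
    rw [← hS]; linarith
  rcases eq_or_lt_of_le (le_trans hlop hs) with heq | hlt
  · -- lo = σ, so p.1 = σ and p = (σ, p.2)
    have hσp : σ ≤ p.1 := by rw [← heq]; exact hlop
    exact subset_convexHull ℝ V ⟨⟨h0, hb, hds, hs⟩, Or.inr (Or.inl (le_antisymm hs hσp))⟩
  · have hp1 : p = ((p.1, p.2) : ℝ × (Fin ν → ℝ)) := rfl
    set a := (σ - p.1) / (σ - lo) with ha
    set b := (p.1 - lo) / (σ - lo) with hb'
    have hd : 0 < σ - lo := by linarith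
    have ha0 : 0 ≤ a := div_nonneg (by linarith [hs]) hd.le
    have hb0 : 0 ≤ b := div_nonneg (by linarith) hd.le
    have hab : a + b = 1 := by
      rw [ha, hb']
      field_simp
      ring
    refine (convex_convexHull ℝ V).segment_subset
      (subset_convexHull ℝ V hlo_mem) (subset_convexHull ℝ V hσ_mem)
      ⟨a, b, ha0, hb0, hab, ?_⟩
    apply Prod.ext
    · show a * lo + b * σ = p.1
      rw [ha, hb']; field_simp; ring
    · show a • p.2 + b • p.2 = p.2
      rw [← add_smul, hab, one_smul]

lemma mem_Pset_single {ν : ℕ} {δ σ : ℝ} {p : ℝ × (Fin ν → ℝ)} {i : Fin ν} {c c2 : ℝ}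
    (h1 : 0 ≤ p.1 + c) (h2 : p.1 + c ≤ σ)
    (h3 : ∀ k, 0 ≤ p.2 k ∧ p.2 k ≤ 1) (h5 : 0 ≤ p.2 i + c2) (h6 : p.2 i + c2 ≤ 1)
    (h7 : δ ≤ p.1 + c + ((∑ k, p.2 k) + c2))
    (h8 : (⌈δ - σ⌉:ℝ) ≤ (∑ k, p.2 k) + c2)
    (h9 : (δ - ⌊δ⌋) * ((⌈δ⌉:ℝ) - ((∑ k, p.2 k) + c2)) ≤ p.1 + c) :
    ((p.1 + c, fun k => p.2 k + if k = i then c2 else 0) : ℝ × (Fin ν → ℝ)) ∈ Pset ν δ σ := by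
  have hs : (∑ k, (p.2 k + if k = i then c2 else 0)) = (∑ k, p.2 k) + c2 := by
    rw [Finset.sum_add_distrib, Finset.sum_ite_eq' Finset.univ i fun _ => c2]
    simp
  refine ⟨h1, h2, ?_, ?_, ?_, ?_⟩
  · intro k
    by_cases hk : k = i
    · subst hk; simpa using ⟨h5, h6⟩
    · simpa [hk] using h3 k
  · show δ ≤ (p.1 + c) + ∑ k, (p.2 k + if k = i then c2 else 0)
    rw [hs]; linarith
  · show (⌈δ - σ⌉:ℝ) ≤ ∑ k, (p.2 k + if k = i then c2 else 0)
    rw [hs]; exact h8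
  · show (δ - ⌊δ⌋) * ((⌈δ⌉:ℝ) - ∑ k, (p.2 k + if k = i then c2 else 0)) ≤ p.1 + c
    rw [hs]; exact h9

lemma mem_Pset_two {ν : ℕ} {δ σ : ℝ} {p : ℝ × (Fin ν → ℝ)} {i j : Fin ν} (hij : i ≠ j) {t : ℝ}
    (hmem : p ∈ Pset ν δ σ)
    (h5 : 0 ≤ p.2 i + t) (h6 : p.2 i + t ≤ 1) (h7 : 0 ≤ p.2 j - t) (h8 : p.2 j - t ≤ 1) :
    ((p.1, fun k => p.2 k + ((if k = i then t else 0) + (if k = j then -t else 0))) :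
      ℝ × (Fin ν → ℝ)) ∈ Pset ν δ σ := by
  obtain ⟨m1, m2, m3, m4, m5, m6⟩ := hmem
  have hs : (∑ k, (p.2 k + ((if k = i then t else 0) + (if k = j then -t else 0))))
      = ∑ k, p.2 k := by
    rw [Finset.sum_add_distrib, Finset.sum_add_distrib,
      Finset.sum_ite_eq' Finset.univ i fun _ => t,
      Finset.sum_ite_eq' Finset.univ j fun _ => -t]
    simp
  refine ⟨m1, m2, ?_, ?_, ?_, ?_⟩
  · intro k
    show 0 ≤ p.2 k + ((if k = i then t else 0) + (if k = j then -t else 0)) ∧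
        p.2 k + ((if k = i then t else 0) + (if k = j then -t else 0)) ≤ 1
    by_cases hki : k = i
    · subst hki
      rw [if_pos rfl, if_neg hij]
      constructor <;> linarith
    · by_cases hkj : k = j
      · subst hkj
        rw [if_neg hki, if_pos rfl]
        constructor <;> linarith
      · rw [if_neg hki, if_neg hkj]
        have hm := m3 k
        constructor <;> linarith [hm.1, hm.2]
  · show δ ≤ p.1 + ∑ k, (p.2 k + ((if k = i then t else 0) + (if k = j then -t else 0)))
    rw [hs]; exact m4
  · show (⌈δ - σ⌉:ℝ) ≤ ∑ k, (p.2 k + ((if k = i then t else 0) + (if k = j then -t else 0)))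
    rw [hs]; exact m5
  · show (δ - ⌊δ⌋) *
        ((⌈δ⌉:ℝ) - ∑ k, (p.2 k + ((if k = i then t else 0) + (if k = j then -t else 0)))) ≤ p.1
    rw [hs]; exact m6

set_option maxHeartbeats 2000000 in
lemma ext_subset_Y (ν : ℕ) (δ σ : ℝ) (hσ0 : 0 ≤ σ) (hσ1 : σ ≤ 1) :
    Set.extremePoints ℝ (Pset ν δ σ) ⊆ Yset ν δ σ := by
  intro p hp
  have hpP := hp.1
  obtain ⟨hα0, hασ, hψ, hδS, hceilS, hfS⟩ := hp.1
  suffices hint : ∀ i, p.2 i = 0 ∨ p.2 i = 1 by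
    exact ⟨hα0, hint, hδS, hασ⟩
  by_contra hcon
  push_neg at hcon
  obtain ⟨i, hi0', hi1'⟩ := hcon
  have hi0 : 0 < p.2 i := lt_of_le_of_ne (hψ i).1 (Ne.symm hi0')
  have hi1 : p.2 i < 1 := lt_of_le_of_ne (hψ i).2 hi1'
  -- single coordinate perturbation principle
  have key : ∀ c c2 : ℝ,
      ((p.1 + c, fun k => p.2 k + if k = i then c2 else 0) : ℝ × (Fin ν → ℝ)) ∈ Pset ν δ σ →
      ((p.1 + -c, fun k => p.2 k + if k = i then -c2 else 0) : ℝ × (Fin ν → ℝ)) ∈ Pset ν δ σ →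
      c = 0 ∧ c2 = 0 := by
    intro c c2 h1 h2
    have hseg : p ∈ segment ℝ
        ((p.1 + -c, fun k => p.2 k + if k = i then -c2 else 0) : ℝ × (Fin ν → ℝ))
        ((p.1 + c, fun k => p.2 k + if k = i then c2 else 0) : ℝ × (Fin ν → ℝ)) := by
      refine ⟨1/2, 1/2, by norm_num, by norm_num, by norm_num, ?_⟩
      apply Prod.ext
      · show (1/2 : ℝ) * (p.1 + -c) + (1/2 : ℝ) * (p.1 + c) = p.1
        ring
      · funext k
        show (1/2 : ℝ) * (p.2 k + if k = i then -c2 else 0)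
            + (1/2 : ℝ) * (p.2 k + if k = i then c2 else 0) = p.2 k
        split_ifs <;> ring
    rcases (mem_extremePoints_iff_forall_segment.mp hp).2 _ h2 _ h1 hseg with h | h
    · have e1 : p.1 + -c = p.1 := congrArg Prod.fst h
      have e2 : p.2 i + (if i = i then -c2 else 0) = p.2 i := congrFun (congrArg Prod.snd h) i
      rw [if_pos rfl] at e2
      exact ⟨by linarith, by linarith⟩
    · have e1 : p.1 + c = p.1 := congrArg Prod.fst h
      have e2 : p.2 i + (if i = i then c2 else 0) = p.2 i := congrFun (congrArg Prod.snd h) i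
      rw [if_pos rfl] at e2
      exact ⟨by linarith, by linarith⟩
  by_cases hex : ∃ j, j ≠ i ∧ p.2 j ≠ 0 ∧ p.2 j ≠ 1
  · -- two fractional coordinates : contradiction
    obtain ⟨j, hji, hj0', hj1'⟩ := hex
    have hj0 : 0 < p.2 j := lt_of_le_of_ne (hψ j).1 (Ne.symm hj0')
    have hj1 : p.2 j < 1 := lt_of_le_of_ne (hψ j).2 hj1'
    have hij : i ≠ j := fun h => hji h.symm
    set t := min (min (p.2 i) (1 - p.2 i)) (min (p.2 j) (1 - p.2 j)) with htdef
    have ht : 0 < t := lt_min (lt_min hi0 (by linarith)) (lt_min hj0 (by linarith))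
    have t1 : t ≤ p.2 i := le_trans (min_le_left _ _) (min_le_left _ _)
    have t2 : t ≤ 1 - p.2 i := le_trans (min_le_left _ _) (min_le_right _ _)
    have t3 : t ≤ p.2 j := le_trans (min_le_right _ _) (min_le_left _ _)
    have t4 : t ≤ 1 - p.2 j := le_trans (min_le_right _ _) (min_le_right _ _)
    have m1 := mem_Pset_two (δ := δ) (σ := σ) hij hpP
      (by linarith) (by linarith) (by linarith) (by linarith)
    have m2 := mem_Pset_two (δ := δ) (σ := σ) (Ne.symm hij) hpP
      (t := t) (by linarith) (by linarith) (by linarith) (by linarith)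
    have hseg : p ∈ segment ℝ
        ((p.1, fun k => p.2 k + ((if k = j then t else 0) + (if k = i then -t else 0))) :
          ℝ × (Fin ν → ℝ))
        ((p.1, fun k => p.2 k + ((if k = i then t else 0) + (if k = j then -t else 0))) :
          ℝ × (Fin ν → ℝ)) := by
      refine ⟨1/2, 1/2, by norm_num, by norm_num, by norm_num, ?_⟩
      apply Prod.ext
      · show (1/2 : ℝ) * p.1 + (1/2 : ℝ) * p.1 = p.1
        ring
      · funext k
        show (1/2 : ℝ) * (p.2 k + ((if k = j then t else 0) + (if k = i then -t else 0)))
            + (1/2 : ℝ) * (p.2 k + ((if k = i then t else 0) + (if k = j then -t else 0)))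
            = p.2 k
        split_ifs <;> ring
    rcases (mem_extremePoints_iff_forall_segment.mp hp).2 _ m2 _ m1 hseg with h | h
    · have e2 : p.2 i + ((if i = j then t else 0) + (if i = i then -t else 0)) = p.2 i :=
        congrFun (congrArg Prod.snd h) i
      rw [if_neg hij, if_pos rfl] at e2
      linarith
    · have e2 : p.2 i + ((if i = i then t else 0) + (if i = j then -t else 0)) = p.2 i :=
        congrFun (congrArg Prod.snd h) i
      rw [if_neg hij, if_pos rfl] at e2
      linarith
  · -- exactly one fractional coordinate
    push_neg at hex
    have hothers : ∀ j, j ≠ i → p.2 j = 0 ∨ p.2 j = 1 := by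
      intro j hj
      by_cases h0 : p.2 j = 0
      · exact Or.inl h0
      · exact Or.inr (hex j hj h0)
    have habs : ∀ k : ℤ, (∑ j, p.2 j) ≠ (k:ℝ) := by
      intro k hk
      obtain ⟨m, hm⟩ := sum_int_of_eraseone p.2 i hothers
      have hsum : p.2 i + ∑ j ∈ Finset.univ.erase i, p.2 j = ∑ j, p.2 j :=
        Finset.add_sum_erase _ _ (Finset.mem_univ i)
      have h1 : (0:ℤ) < k - m := by
        have : (0:ℝ) < ((k - m : ℤ):ℝ) := by push_cast; linarith
        exact_mod_cast this
      have h2 : k - m < 1 := by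
        have : ((k - m : ℤ):ℝ) < 1 := by push_cast; linarith
        exact_mod_cast this
      omega
    have hf0 : 0 ≤ δ - (⌊δ⌋:ℝ) := by linarith [Int.floor_le δ]
    have hf1 : δ - (⌊δ⌋:ℝ) < 1 := by linarith [Int.lt_floor_add_one δ]
    have hδc : δ ≤ (⌈δ⌉:ℝ) := Int.le_ceil δ
    have hT2 : (⌈δ - σ⌉:ℝ) < ∑ j, p.2 j := lt_of_le_of_ne hceilS (Ne.symm (habs _))
    -- first direction : (0, e i)
    have hd1 : δ = p.1 + ∑ j, p.2 j ∨
        (0 < δ - (⌊δ⌋:ℝ) ∧ (δ - (⌊δ⌋:ℝ)) * ((⌈δ⌉:ℝ) - ∑ j, p.2 j) = p.1) := by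
      by_contra hcon2
      push_neg at hcon2
      obtain ⟨hne1, hne3⟩ := hcon2
      have hstrict1 : δ < p.1 + ∑ j, p.2 j := lt_of_le_of_ne hδS hne1
      have hgg : 0 < (if 0 < δ - (⌊δ⌋:ℝ) then
          p.1 - (δ - (⌊δ⌋:ℝ)) * ((⌈δ⌉:ℝ) - ∑ j, p.2 j) else 1) := by
        split_ifs with hfp
        · have hne := hne3 hfp
          have := lt_of_le_of_ne hfS hne
          linarith
        · norm_num
      set g := (if 0 < δ - (⌊δ⌋:ℝ) then
          p.1 - (δ - (⌊δ⌋:ℝ)) * ((⌈δ⌉:ℝ) - ∑ j, p.2 j) else 1) with hgdef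
      set t := min (min (p.2 i) (1 - p.2 i))
          (min (min (p.1 + (∑ j, p.2 j) - δ) ((∑ j, p.2 j) - ⌈δ - σ⌉)) g) with htdef
      have ht : 0 < t := lt_min (lt_min hi0 (by linarith))
        (lt_min (lt_min (by linarith) (by linarith)) hgg)
      have t1 : t ≤ p.2 i := le_trans (min_le_left _ _) (min_le_left _ _)
      have t2 : t ≤ 1 - p.2 i := le_trans (min_le_left _ _) (min_le_right _ _)
      have t3 : t ≤ p.1 + (∑ j, p.2 j) - δ :=
        le_trans (min_le_right _ _) (le_trans (min_le_left _ _) (min_le_left _ _))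
      have t4 : t ≤ (∑ j, p.2 j) - ⌈δ - σ⌉ :=
        le_trans (min_le_right _ _) (le_trans (min_le_left _ _) (min_le_right _ _))
      have t5 : t ≤ g := le_trans (min_le_right _ _) (min_le_right _ _)
      have hft : (δ - (⌊δ⌋:ℝ)) * t ≤ p.1 - (δ - (⌊δ⌋:ℝ)) * ((⌈δ⌉:ℝ) - ∑ j, p.2 j) := by
        by_cases hfp : 0 < δ - (⌊δ⌋:ℝ)
        · have hgeq : g = p.1 - (δ - (⌊δ⌋:ℝ)) * ((⌈δ⌉:ℝ) - ∑ j, p.2 j) := by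
            rw [hgdef, if_pos hfp]
          nlinarith [t5, ht, hf1]
        · have hf00 : δ - (⌊δ⌋:ℝ) = 0 := le_antisymm (not_lt.mp hfp) hf0
          rw [hf00]
          simp
          linarith [hfS, hf00]
      exact (ne_of_gt ht) (key 0 t
        (mem_Pset_single (by linarith) (by linarith) hψ (by linarith) (by linarith)
          (by linarith) (by linarith) (by nlinarith [mul_nonneg hf0 ht.le]))
        (mem_Pset_single (by linarith) (by linarith) hψ (by linarith) (by linarith)
          (by linarith) (by linarith) (by nlinarith [hft]))).2
    -- second direction : (1, -e i)
    have hd2 : p.1 = 0 ∨ p.1 = σ ∨ (δ - (⌊δ⌋:ℝ)) * ((⌈δ⌉:ℝ) - ∑ j, p.2 j) = p.1 := by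
      by_contra hcon2
      push_neg at hcon2
      obtain ⟨hne0, hneσ, hne3⟩ := hcon2
      have hs0 : 0 < p.1 := lt_of_le_of_ne hα0 (Ne.symm hne0)
      have hsσ : p.1 < σ := lt_of_le_of_ne hασ hneσ
      have hg : 0 < p.1 - (δ - (⌊δ⌋:ℝ)) * ((⌈δ⌉:ℝ) - ∑ j, p.2 j) := by
        have := lt_of_le_of_ne hfS hne3
        linarith
      set t := min (min (p.2 i) (1 - p.2 i)) (min (min p.1 (σ - p.1))
          (min ((∑ j, p.2 j) - ⌈δ - σ⌉)
               (p.1 - (δ - (⌊δ⌋:ℝ)) * ((⌈δ⌉:ℝ) - ∑ j, p.2 j)))) with htdef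
      have ht : 0 < t := lt_min (lt_min hi0 (by linarith))
        (lt_min (lt_min hs0 (by linarith)) (lt_min (by linarith) hg))
      have t1 : t ≤ p.2 i := le_trans (min_le_left _ _) (min_le_left _ _)
      have t2 : t ≤ 1 - p.2 i := le_trans (min_le_left _ _) (min_le_right _ _)
      have t3 : t ≤ p.1 :=
        le_trans (min_le_right _ _) (le_trans (min_le_left _ _) (min_le_left _ _))
      have t4 : t ≤ σ - p.1 :=
        le_trans (min_le_right _ _) (le_trans (min_le_left _ _) (min_le_right _ _))
      have t5 : t ≤ (∑ j, p.2 j) - ⌈δ - σ⌉ :=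
        le_trans (min_le_right _ _) (le_trans (min_le_right _ _) (min_le_left _ _))
      have t6 : t ≤ p.1 - (δ - (⌊δ⌋:ℝ)) * ((⌈δ⌉:ℝ) - ∑ j, p.2 j) :=
        le_trans (min_le_right _ _) (le_trans (min_le_right _ _) (min_le_right _ _))
      exact (ne_of_gt ht) (key t (-t)
        (mem_Pset_single (by linarith) (by linarith) hψ (by linarith) (by linarith)
          (by linarith) (by linarith)
          (by nlinarith [mul_nonneg (by linarith : (0:ℝ) ≤ 1 - (δ - (⌊δ⌋:ℝ))) ht.le]))
        (mem_Pset_single (by linarith) (by linarith) hψ (by linarith) (by linarith)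
          (by linarith) (by linarith)
          (by nlinarith [mul_nonneg hf0 ht.le]))).1
    -- the combined tight case T1 ∧ T3
    have hcomb : δ = p.1 + ∑ j, p.2 j →
        (δ - (⌊δ⌋:ℝ)) * ((⌈δ⌉:ℝ) - ∑ j, p.2 j) = p.1 → False := by
      intro hT1 hT3
      rcases ceil_cases δ with hc | hc
      · have hcr : ((⌈δ⌉:ℝ)) = (⌊δ⌋:ℝ) := by exact_mod_cast hc
        have hδint : δ = (⌊δ⌋:ℝ) := le_antisymm (by linarith [Int.le_ceil δ]) (Int.floor_le δ)
        rw [show δ - (⌊δ⌋:ℝ) = 0 by linarith, zero_mul] at hT3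
        exact habs ⌊δ⌋ (by linarith)
      · have hcr : ((⌈δ⌉:ℝ)) = (⌊δ⌋:ℝ) + 1 := by exact_mod_cast hc
        have hkey : ((δ - (⌊δ⌋:ℝ)) - p.1) * (1 - (δ - (⌊δ⌋:ℝ))) = 0 := by
          linear_combination hT3 - (δ - (⌊δ⌋:ℝ)) * hT1 - (δ - (⌊δ⌋:ℝ)) * hcr
        have hp1f : p.1 = δ - (⌊δ⌋:ℝ) := by
          rcases mul_eq_zero.mp hkey with h | h
          · linarith
          · linarith
        exact habs ⌊δ⌋ (by linarith)
    rcases hd1 with hT1 | ⟨hfpos, hT3⟩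
    · rcases hd2 with h0 | hσe | hT3
      · -- α = 0 and tight sum constraint
        have hSδ : (∑ j, p.2 j) = δ := by linarith
        have hf00 : δ - (⌊δ⌋:ℝ) = 0 := by
          rcases ceil_cases δ with hc | hc
          · have hcr : ((⌈δ⌉:ℝ)) = (⌊δ⌋:ℝ) := by exact_mod_cast hc
            linarith [Int.le_ceil δ, Int.floor_le δ]
          · have hcr : ((⌈δ⌉:ℝ)) = (⌊δ⌋:ℝ) + 1 := by exact_mod_cast hc
            by_contra hne
            have hfp : 0 < δ - (⌊δ⌋:ℝ) := lt_of_le_of_ne hf0 (Ne.symm hne)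
            have he : (δ - (⌊δ⌋:ℝ)) * ((⌈δ⌉:ℝ) - ∑ j, p.2 j)
                = (δ - (⌊δ⌋:ℝ)) * (1 - (δ - (⌊δ⌋:ℝ))) := by
              rw [hcr, hSδ]; ring
            nlinarith [hfS, he, mul_pos hfp (show (0:ℝ) < 1 - (δ - (⌊δ⌋:ℝ)) by linarith)]
        exact habs ⌊δ⌋ (by linarith)
      · -- α = σ and tight sum constraint : contradicts strict T2
        exact absurd hT2 (by push_neg; linarith [Int.le_ceil (δ - σ)])
      · exact hcomb hT1 hT3
    · -- f > 0 and the f-constraint is tight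
      have hcr : ((⌈δ⌉:ℝ)) = (⌊δ⌋:ℝ) + 1 := by
        rcases ceil_cases δ with hc | hc
        · have h1 : ((⌈δ⌉:ℝ)) = (⌊δ⌋:ℝ) := by exact_mod_cast hc
          have : δ = (⌊δ⌋:ℝ) := le_antisymm (by linarith [Int.le_ceil δ]) (Int.floor_le δ)
          exfalso; linarith
        · exact_mod_cast hc
      -- third direction : (f, -e i)
      have hd3 : p.1 = 0 ∨ p.1 = σ ∨ δ = p.1 + ∑ j, p.2 j := by
        by_contra hcon2
        push_neg at hcon2
        obtain ⟨hne0, hneσ, hne1⟩ := hcon2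
        have hs0 : 0 < p.1 := lt_of_le_of_ne hα0 (Ne.symm hne0)
        have hsσ : p.1 < σ := lt_of_le_of_ne hασ hneσ
        have hstrict1 : δ < p.1 + ∑ j, p.2 j := lt_of_le_of_ne hδS hne1
        set t := min (min (p.2 i) (1 - p.2 i)) (min (min p.1 (σ - p.1))
            (min (p.1 + (∑ j, p.2 j) - δ) ((∑ j, p.2 j) - ⌈δ - σ⌉))) with htdef
        have ht : 0 < t := lt_min (lt_min hi0 (by linarith))
          (lt_min (lt_min hs0 (by linarith)) (lt_min (by linarith) (by linarith)))
        have t1 : t ≤ p.2 i := le_trans (min_le_left _ _) (min_le_left _ _)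
        have t2 : t ≤ 1 - p.2 i := le_trans (min_le_left _ _) (min_le_right _ _)
        have t3 : t ≤ p.1 :=
          le_trans (min_le_right _ _) (le_trans (min_le_left _ _) (min_le_left _ _))
        have t4 : t ≤ σ - p.1 :=
          le_trans (min_le_right _ _) (le_trans (min_le_left _ _) (min_le_right _ _))
        have t5 : t ≤ p.1 + (∑ j, p.2 j) - δ :=
          le_trans (min_le_right _ _) (le_trans (min_le_right _ _) (min_le_left _ _))
        have t6 : t ≤ (∑ j, p.2 j) - ⌈δ - σ⌉ :=
          le_trans (min_le_right _ _) (le_trans (min_le_right _ _) (min_le_right _ _))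
        have hft0 : 0 ≤ (δ - (⌊δ⌋:ℝ)) * t := mul_nonneg hf0 ht.le
        have hft1 : (δ - (⌊δ⌋:ℝ)) * t ≤ t := by
          have := mul_nonneg (by linarith : (0:ℝ) ≤ 1 - (δ - (⌊δ⌋:ℝ))) ht.le
          nlinarith
        have hkey := key ((δ - (⌊δ⌋:ℝ)) * t) (-t)
          (mem_Pset_single (by linarith) (by linarith [hft1, t4]) hψ (by linarith) (by linarith)
            (by linarith [hft0, t5]) (by linarith) (by linarith [hT3]))
          (mem_Pset_single (by linarith [hft1, t3]) (by linarith [hft0]) hψ (by linarith)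
            (by linarith) (by linarith [hft1, hδS]) (by linarith) (by linarith [hT3]))
        exact (ne_of_gt ht) (by linarith [hkey.2])
      rcases hd3 with h0 | hσe | hT1
      · -- α = 0 : then the sum is ⌈δ⌉
        have hz : (δ - (⌊δ⌋:ℝ)) * ((⌈δ⌉:ℝ) - ∑ j, p.2 j) = 0 := by rw [hT3, h0]
        rcases mul_eq_zero.mp hz with h | h
        · linarith
        · exact habs ⌈δ⌉ (by linarith)
      · -- α = σ
        have hup : ⌈δ - σ⌉ ≤ ⌈δ⌉ := Int.ceil_mono (by linarith)
        have hdown : ⌈δ⌉ - 1 ≤ ⌈δ - σ⌉ := by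
          have h1 : ⌈δ - 1⌉ ≤ ⌈δ - σ⌉ := Int.ceil_mono (by linarith)
          have h2 : ⌈δ - 1⌉ = ⌈δ⌉ - 1 := by
            have h3 := Int.ceil_sub_intCast δ 1
            push_cast at h3
            omega
          omega
        rcases (by omega : ⌈δ - σ⌉ = ⌈δ⌉ - 1 ∨ ⌈δ - σ⌉ = ⌈δ⌉) with hm | hm
        · have hm' : ((⌈δ - σ⌉:ℤ):ℝ) = (⌈δ⌉:ℝ) - 1 := by exact_mod_cast hm
          have hge : δ - σ ≤ ((⌈δ - σ⌉:ℤ):ℝ) := Int.le_ceil _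
          have hσf : δ - (⌊δ⌋:ℝ) ≤ σ := by linarith
          have hSl : (⌈δ⌉:ℝ) - 1 < ∑ j, p.2 j := by linarith
          nlinarith [hT3, hσe,
            mul_lt_mul_of_pos_left (show (⌈δ⌉:ℝ) - (∑ j, p.2 j) < 1 by linarith) hfpos]
        · have hm' : ((⌈δ - σ⌉:ℤ):ℝ) = (⌈δ⌉:ℝ) := by exact_mod_cast hm
          nlinarith [hT3, hσe,
            mul_pos hfpos (show (0:ℝ) < (∑ j, p.2 j) - (⌈δ⌉:ℝ) by linarith)]
      · exact hcomb hT1 hT3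


/-- (Lemma 2 of the paper.) Description of the convex hull of
`Y = {(α, ψ) ∈ ℝ_{≥0} × {0,1}^ν : α + Σ ψ_i ≥ δ, α ≤ σ}`. -/
theorem stmt12
    (ν : ℕ) (hν : 0 < ν) (δ σ : ℝ) (hδ : 0 < δ) (hσ0 : 0 ≤ σ) (hσ1 : σ ≤ 1)
    (hν' : ⌈δ - σ⌉ ≤ (ν : ℤ)) :
    convexHull ℝ
      {p : ℝ × (Fin ν → ℝ) | 0 ≤ p.1 ∧ (∀ i, p.2 i = 0 ∨ p.2 i = 1) ∧
        δ ≤ p.1 + ∑ i, p.2 i ∧ p.1 ≤ σ} =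
    {p : ℝ × (Fin ν → ℝ) | 0 ≤ p.1 ∧ p.1 ≤ σ ∧ (∀ i, 0 ≤ p.2 i ∧ p.2 i ≤ 1) ∧
      δ ≤ p.1 + (∑ i, p.2 i) ∧
      (⌈δ - σ⌉ : ℝ) ≤ (∑ i, p.2 i) ∧
      (δ - ⌊δ⌋) * ((⌈δ⌉ : ℝ) - ∑ i, p.2 i) ≤ p.1} := by
  show convexHull ℝ (Yset ν δ σ) = Pset ν δ σ
  have hYP : Yset ν δ σ ⊆ Pset ν δ σ := Y_subset_P ν δ σ hσ1
  have hconv := convex_P ν δ σ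
  have hcomp := compact_P ν δ σ
  have hKM := closure_convexHull_extremePoints hcomp hconv
  have hext := ext_subset_Y ν δ σ hσ0 hσ1
  have hVfin := finite_V ν δ σ
  have hYV := Y_subset_hullV ν δ σ hσ0
  have hVY : {p ∈ Yset ν δ σ | p.1 = 0 ∨ p.1 = σ ∨ p.1 + ∑ i, p.2 i = δ} ⊆ Yset ν δ σ :=
    Set.sep_subset _ _
  have hhull : convexHull ℝ (Yset ν δ σ) =
      convexHull ℝ {p ∈ Yset ν δ σ | p.1 = 0 ∨ p.1 = σ ∨ p.1 + ∑ i, p.2 i = δ} :=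
    le_antisymm (convexHull_min hYV (convex_convexHull ℝ _)) (convexHull_mono hVY)
  apply Set.Subset.antisymm
  · exact convexHull_min hYP hconv
  · intro p hpP
    have h1 : p ∈ closure (convexHull ℝ (Set.extremePoints ℝ (Pset ν δ σ))) := by
      rw [hKM]; exact hpP
    have h2 : p ∈ closure (convexHull ℝ (Yset ν δ σ)) :=
      closure_mono (convexHull_mono hext) h1
    rw [hhull] at h2
    have h3 : IsClosed (convexHull ℝ
        {p ∈ Yset ν δ σ | p.1 = 0 ∨ p.1 = σ ∨ p.1 + ∑ i, p.2 i = δ}) :=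
      (hVfin.isCompact_convexHull ℝ).isClosed
    rw [h3.closure_eq] at h2
    rw [hhull]
    exact h2
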